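/- Let G be a finite simple graph and H an induced subgraph of G. Let C be the union of all vertex subsets of G that induce a subgraph isomorphic to H (the cover of H in G). Then |C| ≥ Anch(G), where Anch(G) is the anchor number of G. -/

import Mathlib

/-- `A` is the vertex set of an anchor of `G`: a nonempty proper vertex subset such
that `A` is the unique vertex subset of `G` inducing a subgraph isomorphic to `G[A]`. -/
def IsAnchor {V : Type*} (G : SimpleGraph V) (A : Set V) : Prop :=
  A.Nonempty ∧ A ≠ Set.univ ∧
    ∀ S : Set V, Nonempty (G.induce S ≃g G.induce A) → S = A

/-- The anchor number of `G`: the minimum order of an anchor of `G`,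
taken to be `n = |V(G)|` if `G` has no anchor. -/
noncomputable def anchNum {V : Type*} [Fintype V] (G : SimpleGraph V) : ℕ :=
  sInf ({Fintype.card V} ∪ {k : ℕ | ∃ A : Set V, IsAnchor G A ∧ A.ncard = k})

/-- Restricting a graph isomorphism of induced subgraphs to a smaller induced subgraph. -/
noncomputable def induceRestrictIso {V : Type*} (G : SimpleGraph V) {A B A' : Set V}
    (ψ : G.induce A ≃g G.induce B) (h : A' ⊆ A) :
    G.induce (Set.range (fun a : A' => (ψ ⟨a.1, h a.2⟩ : V))) ≃g G.induce A' := by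
  have hinj : Function.Injective (fun a : A' => (ψ ⟨a.1, h a.2⟩ : V)) := by
    intro a b hab
    have h1 : ψ ⟨a.1, h a.2⟩ = ψ ⟨b.1, h b.2⟩ := Subtype.ext hab
    have h2 := ψ.injective h1
    have h3 : (a : V) = b := by simpa using h2
    exact Subtype.ext h3
  refine ⟨(Equiv.ofInjective _ hinj).symm, ?_⟩
  intro x y
  obtain ⟨a, ha⟩ := (Equiv.ofInjective _ hinj).surjective x
  obtain ⟨b, hb⟩ := (Equiv.ofInjective _ hinj).surjective y
  subst ha hb
  simp only [Equiv.symm_apply_apply]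
  have := ψ.map_adj_iff (v := ⟨a.1, h a.2⟩) (w := ⟨b.1, h b.2⟩)
  simpa [SimpleGraph.comap] using this.symm

theorem anchNum_le_ncard_cover {V : Type*} [Fintype V] (G : SimpleGraph V)
    (T : Set V) (hT : T.Nonempty) :
    anchNum G ≤ (⋃₀ {S : Set V | Nonempty (G.induce S ≃g G.induce T)}).ncard := by
  classical
  set F : Set (Set V) := {S : Set V | Nonempty (G.induce S ≃g G.induce T)} with hF
  set C : Set V := ⋃₀ F with hC
  have hTF : T ∈ F := ⟨RelIso.refl _⟩
  have hTC : T ⊆ C := Set.subset_sUnion_of_mem hTF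
  by_cases hcu : C = Set.univ
  · rw [hcu, Set.ncard_univ, Nat.card_eq_fintype_card]
    exact Nat.sInf_le (Or.inl rfl)
  · apply Nat.sInf_le
    right
    refine ⟨C, ⟨hT.mono hTC, hcu, ?_⟩, rfl⟩
    rintro S ⟨φ⟩
    have ψ : G.induce C ≃g G.induce S := φ.symm
    have hSC : S ⊆ C := by
      intro s hs
      obtain ⟨a, ha⟩ := ψ.surjective ⟨s, hs⟩
      obtain ⟨S', hS'F, haS'⟩ := a.2
      have hS'C : S' ⊆ C := Set.subset_sUnion_of_mem hS'F
      set D : Set V := Set.range (fun x : S' => (ψ ⟨x.1, hS'C x.2⟩ : V)) with hD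
      have hDF : D ∈ F := ⟨(induceRestrictIso G ψ hS'C).trans hS'F.some⟩
      have hsD : s ∈ D := by
        refine ⟨⟨a.1, haS'⟩, ?_⟩
        show (ψ ⟨a.1, hS'C haS'⟩ : V) = s
        have ha2 : (⟨a.1, hS'C haS'⟩ : {x // x ∈ C}) = a := Subtype.ext rfl
        rw [ha2, ha]
      exact Set.subset_sUnion_of_mem hDF hsD
    have hcard : C.ncard ≤ S.ncard := by
      have : Nat.card S = Nat.card C := Nat.card_congr φ.toEquiv
      rw [Nat.card_coe_set_eq, Nat.card_coe_set_eq] at this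
      omega
    exact Set.eq_of_subset_of_ncard_le hSC hcard (Set.toFinite C)
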